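/- arXiv:1903.01580 — 2 statements merged into one kernel-verified Lean document; each statement's English description precedes it below -/
import Mathlib

section
/- Let $A$ be a unitary $K$-algebra with a finite complete set $\mathcal{I}$ of orthogonal idempotents and elements $\phi_e, \psi_e$ ($e \in \mathcal{I}$) with $\phi_e\psi_e e = e$ and $e\phi_e\psi_e = e$. Let $\mathcal{J} = \{\psi_e e \phi_e : e \in \mathcal{I}\}$, for $\epsilon \in \mathcal{J}$ set $\mathcal{I}_\epsilon = \{e \in \mathcal{I} : \psi_e e \phi_e = \epsilon\}$ and $\hat\epsilon = \sum_{e \in \mathcal{I}_\epsilon} e$. If $\hat\epsilon A \hat\epsilon' = \{0\}$ whenever $\epsilon \neq \epsilon'$ in $\mathcal{J}$, then $A \simeq \bigoplus_{\epsilon \in \mathcal{J}} \mathrm{Mat}_{\mathcal{I}_\epsilon}(\epsilon A \epsilon)$ as $K$-algebras. -/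
set_option linter.unusedSectionVars false
set_option maxHeartbeats 1000000

def corner (K : Type*) {A : Type*} [CommRing K] [Ring A] [Algebra K A] (a : A) :
    NonUnitalSubalgebra K A where
  carrier := Set.range fun x => a * x * a
  add_mem' := by
    rintro x y ⟨u, rfl⟩ ⟨v, rfl⟩
    exact ⟨u + v, by simp [mul_add, add_mul]⟩
  mul_mem' := by
    rintro x y ⟨u, rfl⟩ ⟨v, rfl⟩
    exact ⟨u * a * (a * v), by simp [mul_assoc]⟩
  smul_mem' := by
    rintro c x ⟨u, rfl⟩
    exact ⟨c • u, by simp [mul_smul_comm, smul_mul_assoc]⟩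
  zero_mem' := ⟨0, by simp⟩

namespace DecompAux

variable {K A ι : Type*} [CommRing K] [Ring A] [Algebra K A]
  [Fintype ι] [DecidableEq ι] [DecidableEq A]

section Defs
variable (e phi psi : ι → A)
abbrev hat (a : A) : A := ∑ k ∈ Finset.univ.filter fun k => psi k * e k * phi k = a, e k
end Defs

variable {e phi psi : ι → A}

theorem huv (hidem : ∀ i, IsIdempotentElem (e i)) (h2 : ∀ i, e i * phi i * psi i = e i) (i : ι) :
    e i * phi i * (psi i * e i) = e i := by
  calc e i * phi i * (psi i * e i) = (e i * phi i * psi i) * e i := by noncomm_ring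
    _ = e i := by rw [h2 i, hidem i]

theorem hvu (hidem : ∀ i, IsIdempotentElem (e i)) (i : ι) :
    psi i * e i * (e i * phi i) = psi i * e i * phi i := by
  calc psi i * e i * (e i * phi i) = psi i * (e i * e i) * phi i := by noncomm_ring
    _ = _ := by rw [hidem i]

theorem hEv (hidem : ∀ i, IsIdempotentElem (e i)) (h2 : ∀ i, e i * phi i * psi i = e i) (i : ι) :
    psi i * e i * phi i * (psi i * e i) = psi i * e i := by
  calc psi i * e i * phi i * (psi i * e i) = psi i * (e i * phi i * psi i) * e i := by noncomm_ring
    _ = psi i * (e i * e i) := by rw [h2 i]; noncomm_ring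
    _ = _ := by rw [hidem i]

theorem huE (hidem : ∀ i, IsIdempotentElem (e i)) (h2 : ∀ i, e i * phi i * psi i = e i) (i : ι) :
    e i * phi i * (psi i * e i * phi i) = e i * phi i := by
  calc e i * phi i * (psi i * e i * phi i) = (e i * phi i * psi i) * e i * phi i := by noncomm_ring
    _ = (e i * e i) * phi i := by rw [h2 i]
    _ = _ := by rw [hidem i]

theorem hEE (hidem : ∀ i, IsIdempotentElem (e i)) (h2 : ∀ i, e i * phi i * psi i = e i) (i : ι) :
    psi i * e i * phi i * (psi i * e i * phi i) = psi i * e i * phi i := by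
  calc psi i * e i * phi i * (psi i * e i * phi i)
      = psi i * (e i * phi i * psi i) * e i * phi i := by noncomm_ring
    _ = psi i * (e i * e i) * phi i := by rw [h2 i]; noncomm_ring
    _ = _ := by rw [hidem i]

theorem hvu0 (horth : ∀ i j, i ≠ j → e i * e j = 0) {i j : ι} (h : i ≠ j) :
    psi i * e i * (e j * phi j) = 0 := by
  calc psi i * e i * (e j * phi j) = psi i * (e i * e j) * phi j := by noncomm_ring
    _ = 0 := by rw [horth i j h]; noncomm_ring

theorem L1 (hidem : ∀ i, IsIdempotentElem (e i)) (horth : ∀ i j, i ≠ j → e i * e j = 0) (i : ι) :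
    e i * hat e phi psi (psi i * e i * phi i) = e i := by
  rw [Finset.mul_sum]
  rw [Finset.sum_eq_single i (fun k _ hk => horth i k (Ne.symm hk)) (by simp)]
  exact hidem i

theorem L2 (hidem : ∀ i, IsIdempotentElem (e i)) (horth : ∀ i j, i ≠ j → e i * e j = 0) (i : ι) :
    hat e phi psi (psi i * e i * phi i) * e i = e i := by
  rw [Finset.sum_mul]
  rw [Finset.sum_eq_single i (fun k _ hk => horth k i hk) (by simp)]
  exact hidem i

theorem L3 (hidem : ∀ i, IsIdempotentElem (e i)) (horth : ∀ i j, i ≠ j → e i * e j = 0)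
    (hdisj : ∀ i j : ι, psi i * e i * phi i ≠ psi j * e j * phi j →
      ∀ x : A, hat e phi psi (psi i * e i * phi i) * x * hat e phi psi (psi j * e j * phi j) = 0)
    {i j : ι} (h : psi i * e i * phi i ≠ psi j * e j * phi j) (x : A) :
    e i * x * e j = 0 := by
  conv_lhs => rw [← L1 (phi := phi) (psi := psi) hidem horth i,
    ← L2 (phi := phi) (psi := psi) hidem horth j]
  calc e i * hat e phi psi (psi i * e i * phi i) * x * (hat e phi psi (psi j * e j * phi j) * e j)
      = e i * (hat e phi psi (psi i * e i * phi i) * x * hat e phi psi (psi j * e j * phi j)) * e j := by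
        noncomm_ring
    _ = 0 := by rw [hdisj i j h x]; noncomm_ring

theorem L4 (hidem : ∀ i, IsIdempotentElem (e i)) (horth : ∀ i j, i ≠ j → e i * e j = 0)
    (hcomplete : ∑ i, e i = 1)
    (hdisj : ∀ i j : ι, psi i * e i * phi i ≠ psi j * e j * phi j →
      ∀ x : A, hat e phi psi (psi i * e i * phi i) * x * hat e phi psi (psi j * e j * phi j) = 0)
    (i : ι) (x : A) : e i * x * hat e phi psi (psi i * e i * phi i) = e i * x := by
  conv_rhs => rw [← mul_one (e i * x), ← hcomplete]
  rw [Finset.mul_sum, Finset.mul_sum]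
  rw [← Finset.sum_filter_add_sum_filter_not Finset.univ
    (fun k => psi k * e k * phi k = psi i * e i * phi i) (fun k => e i * x * e k)]
  have : ∑ k ∈ Finset.univ.filter fun k => ¬ psi k * e k * phi k = psi i * e i * phi i,
      e i * x * e k = 0 := by
    refine Finset.sum_eq_zero fun k hk => ?_
    simp only [Finset.mem_filter] at hk
    exact L3 hidem horth hdisj (fun h => hk.2 h.symm) x
  rw [this, add_zero]

theorem hEkey (hidem : ∀ i, IsIdempotentElem (e i)) (horth : ∀ i j, i ≠ j → e i * e j = 0)
    (hcomplete : ∑ i, e i = 1)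
    (hdisj : ∀ i j : ι, psi i * e i * phi i ≠ psi j * e j * phi j →
      ∀ x : A, hat e phi psi (psi i * e i * phi i) * x * hat e phi psi (psi j * e j * phi j) = 0)
    (i : ι) (x : A) :
    psi i * e i * x * hat e phi psi (psi i * e i * phi i) = psi i * e i * x := by
  calc psi i * e i * x * hat e phi psi (psi i * e i * phi i)
      = psi i * (e i * x * hat e phi psi (psi i * e i * phi i)) := by noncomm_ring
    _ = psi i * (e i * x) := by rw [L4 hidem horth hcomplete hdisj i x]
    _ = psi i * e i * x := by noncomm_ring

theorem sum_fiber (e phi psi : ι → A) (a : A) :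
    ∑ k : {i : ι // psi i * e i * phi i = a}, e k.1 = hat e phi psi a :=
  (Finset.sum_subtype _ (by simp) e).symm

variable (K)

/-- The map underlying the decomposition isomorphism. -/
def F (e phi psi : ι → A) (hidem : ∀ i, IsIdempotentElem (e i))
    (h2 : ∀ i, e i * phi i * psi i = e i) (x : A) :
    ∀ eps : {a : A // ∃ i, psi i * e i * phi i = a},
      Matrix {i : ι // psi i * e i * phi i = (eps : A)}
        {i : ι // psi i * e i * phi i = (eps : A)} (corner K (eps : A)) :=
  fun eps i j => ⟨psi i.1 * e i.1 * x * (e j.1 * phi j.1),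
    ⟨psi i.1 * e i.1 * x * (e j.1 * phi j.1), by
      calc (eps : A) * (psi i.1 * e i.1 * x * (e j.1 * phi j.1)) * (eps : A)
          = (psi i.1 * e i.1 * phi i.1 * (psi i.1 * e i.1)) * x *
              (e j.1 * phi j.1 * (psi j.1 * e j.1 * phi j.1)) := by
            rw [i.2, j.2]; noncomm_ring
        _ = (psi i.1 * e i.1) * x * (e j.1 * phi j.1) := by
            rw [hEv hidem h2 i.1, huE hidem h2 j.1]
        _ = psi i.1 * e i.1 * x * (e j.1 * phi j.1) := by noncomm_ring⟩⟩

theorem F_val (e phi psi : ι → A) (hidem : ∀ i, IsIdempotentElem (e i))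
    (h2 : ∀ i, e i * phi i * psi i = e i) (x : A)
    (eps : {a : A // ∃ i, psi i * e i * phi i = a})
    (i j : {i : ι // psi i * e i * phi i = (eps : A)}) :
    (F K e phi psi hidem h2 x eps i j : A) = psi i.1 * e i.1 * x * (e j.1 * phi j.1) := rfl

/-- The decomposition homomorphism. -/
def FHom (e phi psi : ι → A) (hidem : ∀ i, IsIdempotentElem (e i))
    (horth : ∀ i j, i ≠ j → e i * e j = 0)
    (hcomplete : ∑ i, e i = 1)
    (h2 : ∀ i, e i * phi i * psi i = e i)
    (hdisj : ∀ i j : ι, psi i * e i * phi i ≠ psi j * e j * phi j →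
      ∀ x : A, hat e phi psi (psi i * e i * phi i) * x * hat e phi psi (psi j * e j * phi j) = 0) :
    A →ₙₐ[K] (∀ eps : {a : A // ∃ i, psi i * e i * phi i = a},
      Matrix {i : ι // psi i * e i * phi i = (eps : A)}
        {i : ι // psi i * e i * phi i = (eps : A)} (corner K (eps : A))) where
  toFun := F K e phi psi hidem h2
  map_smul' := by
    intro c x
    funext eps
    apply Matrix.ext
    intro i j
    apply Subtype.ext
    simp only [Pi.smul_apply, Matrix.smul_apply, SetLike.val_smul, F_val, MonoidHom.id_apply]
    simp [mul_smul_comm, smul_mul_assoc]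
  map_zero' := by
    funext eps
    apply Matrix.ext
    intro i j
    apply Subtype.ext
    simp only [F_val, Pi.zero_apply, Matrix.zero_apply, ZeroMemClass.coe_zero]
    simp
  map_add' := by
    intro x y
    funext eps
    apply Matrix.ext
    intro i j
    apply Subtype.ext
    simp only [Pi.add_apply, Matrix.add_apply, AddMemClass.coe_add, F_val]
    noncomm_ring
  map_mul' := by
    intro x y
    funext eps
    apply Matrix.ext
    intro i j
    apply Subtype.ext
    simp only [Pi.mul_apply, Matrix.mul_apply, AddSubmonoidClass.coe_finset_sum,
      MulMemClass.coe_mul, F_val]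
    have step : ∀ k : {i : ι // psi i * e i * phi i = (eps : A)},
        (psi i.1 * e i.1 * x * (e k.1 * phi k.1)) * (psi k.1 * e k.1 * y * (e j.1 * phi j.1))
          = psi i.1 * e i.1 * x * e k.1 * (y * (e j.1 * phi j.1)) := by
      intro k
      calc (psi i.1 * e i.1 * x * (e k.1 * phi k.1)) * (psi k.1 * e k.1 * y * (e j.1 * phi j.1))
          = psi i.1 * e i.1 * x * (e k.1 * phi k.1 * (psi k.1 * e k.1)) *
              (y * (e j.1 * phi j.1)) := by noncomm_ring
        _ = _ := by rw [huv hidem h2 k.1]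
    have hhat : hat e phi psi (eps : A) = hat e phi psi (psi i.1 * e i.1 * phi i.1) := by
      rw [i.2]
    rw [Finset.sum_congr rfl fun k _ => step k, ← Finset.sum_mul, ← Finset.mul_sum,
      sum_fiber e phi psi, hhat, hEkey hidem horth hcomplete hdisj i.1 x]
    noncomm_ring

theorem FHom_val (e phi psi : ι → A) (hidem : ∀ i, IsIdempotentElem (e i))
    (horth : ∀ i j, i ≠ j → e i * e j = 0)
    (hcomplete : ∑ i, e i = 1)
    (h2 : ∀ i, e i * phi i * psi i = e i)
    (hdisj : ∀ i j : ι, psi i * e i * phi i ≠ psi j * e j * phi j →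
      ∀ x : A, hat e phi psi (psi i * e i * phi i) * x * hat e phi psi (psi j * e j * phi j) = 0)
    (x : A) (eps : {a : A // ∃ i, psi i * e i * phi i = a})
    (i j : {i : ι // psi i * e i * phi i = (eps : A)}) :
    (FHom K e phi psi hidem horth hcomplete h2 hdisj x eps i j : A)
      = psi i.1 * e i.1 * x * (e j.1 * phi j.1) := rfl

theorem corner_absorb (hidem : ∀ i, IsIdempotentElem (e i))
    (h2 : ∀ i, e i * phi i * psi i = e i) (i0 : ι) (z : A)
    (hz : z ∈ corner K (psi i0 * e i0 * phi i0)) :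
    (psi i0 * e i0 * phi i0) * z * (psi i0 * e i0 * phi i0) = z := by
  obtain ⟨y, hy⟩ := hz
  rw [← hy]
  calc psi i0 * e i0 * phi i0 * (psi i0 * e i0 * phi i0 * y * (psi i0 * e i0 * phi i0)) *
        (psi i0 * e i0 * phi i0)
      = (psi i0 * e i0 * phi i0 * (psi i0 * e i0 * phi i0)) * y *
        (psi i0 * e i0 * phi i0 * (psi i0 * e i0 * phi i0)) := by noncomm_ring
    _ = _ := by rw [hEE hidem h2 i0]

theorem FHom_injective (e phi psi : ι → A) (hidem : ∀ i, IsIdempotentElem (e i))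
    (horth : ∀ i j, i ≠ j → e i * e j = 0)
    (hcomplete : ∑ i, e i = 1)
    (h2 : ∀ i, e i * phi i * psi i = e i)
    (hdisj : ∀ i j : ι, psi i * e i * phi i ≠ psi j * e j * phi j →
      ∀ x : A, hat e phi psi (psi i * e i * phi i) * x * hat e phi psi (psi j * e j * phi j) = 0) :
    Function.Injective (FHom K e phi psi hidem horth hcomplete h2 hdisj) := by
  rw [injective_iff_map_eq_zero]
  intro x hx
  have entry0 : ∀ a b : ι, psi b * e b * phi b = psi a * e a * phi a →
      psi a * e a * x * (e b * phi b) = 0 := by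
    intro a b hba
    have h3 := congrArg Subtype.val
      (congrFun (congrFun (congrFun hx ⟨psi a * e a * phi a, ⟨a, rfl⟩⟩) ⟨a, rfl⟩) ⟨b, hba⟩)
    simpa [FHom_val] using h3
  have hzero : ∀ a b : ι, e a * x * e b = 0 := by
    intro a b
    by_cases hcase : psi b * e b * phi b = psi a * e a * phi a
    · have h0 := entry0 a b hcase
      calc e a * x * e b
          = (e a * phi a * (psi a * e a)) * x * (e b * phi b * (psi b * e b)) := by
            rw [huv hidem h2 a, huv hidem h2 b]
        _ = (e a * phi a) * (psi a * e a * x * (e b * phi b)) * (psi b * e b) := by noncomm_ring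
        _ = 0 := by rw [h0, mul_zero, zero_mul]
    · exact L3 hidem horth hdisj (fun h => hcase h.symm) x
  calc x = (∑ a, e a) * x * (∑ b, e b) := by rw [hcomplete, one_mul, mul_one]
    _ = ∑ a, ∑ b, e a * x * e b := by
        simp only [Finset.sum_mul, Finset.mul_sum]; rw [Finset.sum_comm]
    _ = 0 := Finset.sum_eq_zero fun a _ => Finset.sum_eq_zero fun b _ => hzero a b

theorem FHom_surjective (e phi psi : ι → A) (hidem : ∀ i, IsIdempotentElem (e i))
    (horth : ∀ i j, i ≠ j → e i * e j = 0)
    (hcomplete : ∑ i, e i = 1)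
    (h2 : ∀ i, e i * phi i * psi i = e i)
    (hdisj : ∀ i j : ι, psi i * e i * phi i ≠ psi j * e j * phi j →
      ∀ x : A, hat e phi psi (psi i * e i * phi i) * x * hat e phi psi (psi j * e j * phi j) = 0) :
    Function.Surjective (FHom K e phi psi hidem horth hcomplete h2 hdisj) := by
  intro m
  have hm : ∀ (eps1 eps2 : {a : A // ∃ i, psi i * e i * phi i = a}) (_ : eps1 = eps2)
      (a b : ι) (ha1 : psi a * e a * phi a = (eps1 : A)) (hb1 : psi b * e b * phi b = (eps1 : A))
      (ha2 : psi a * e a * phi a = (eps2 : A)) (hb2 : psi b * e b * phi b = (eps2 : A)),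
      (↑(m eps1 ⟨a, ha1⟩ ⟨b, hb1⟩) : A) = ↑(m eps2 ⟨a, ha2⟩ ⟨b, hb2⟩) := by
    rintro eps1 eps2 rfl a b ha1 hb1 ha2 hb2; rfl
  refine ⟨∑ a, ∑ b, if h : psi b * e b * phi b = psi a * e a * phi a then
      e a * phi a * ↑(m ⟨psi a * e a * phi a, ⟨a, rfl⟩⟩ ⟨a, rfl⟩ ⟨b, h⟩) * (psi b * e b)
    else 0, ?_⟩
  funext eps
  apply Matrix.ext
  intro i j
  apply Subtype.ext
  rw [FHom_val]
  simp only [Finset.mul_sum, Finset.sum_mul]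
  have hL : ∀ (a b : ι) (c : A), a ≠ i.1 →
      psi i.1 * e i.1 * (e a * phi a * c * (psi b * e b)) * (e j.1 * phi j.1) = 0 := by
    intro a b c ha
    calc psi i.1 * e i.1 * (e a * phi a * c * (psi b * e b)) * (e j.1 * phi j.1)
        = (psi i.1 * e i.1 * (e a * phi a)) * (c * (psi b * e b) * (e j.1 * phi j.1)) := by
          noncomm_ring
      _ = 0 := by rw [hvu0 horth (Ne.symm ha), zero_mul]
  have hR : ∀ (b : ι) (c : A), b ≠ j.1 →
      psi i.1 * e i.1 * (e i.1 * phi i.1 * c * (psi b * e b)) * (e j.1 * phi j.1) = 0 := by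
    intro b c hb
    calc psi i.1 * e i.1 * (e i.1 * phi i.1 * c * (psi b * e b)) * (e j.1 * phi j.1)
        = (psi i.1 * e i.1 * (e i.1 * phi i.1)) * c * (psi b * e b * (e j.1 * phi j.1)) := by
          noncomm_ring
      _ = 0 := by rw [hvu0 horth hb, mul_zero]
  rw [Finset.sum_eq_single i.1 (fun a _ ha => Finset.sum_eq_zero fun b _ => by
      by_cases h : psi b * e b * phi b = psi a * e a * phi a
      · rw [dif_pos h]; exact hL a b _ ha
      · rw [dif_neg h]; simp) (by simp)]
  have hcond : psi j.1 * e j.1 * phi j.1 = psi i.1 * e i.1 * phi i.1 := j.2.trans i.2.symm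
  rw [Finset.sum_eq_single j.1 (fun b _ hb => by
      by_cases h : psi b * e b * phi b = psi i.1 * e i.1 * phi i.1
      · rw [dif_pos h]; exact hR b _ hb
      · rw [dif_neg h]; simp) (by simp)]
  rw [dif_pos hcond]
  have hc : (↑(m ⟨psi i.1 * e i.1 * phi i.1, ⟨i.1, rfl⟩⟩ ⟨i.1, rfl⟩ ⟨j.1, hcond⟩) : A)
      = ↑(m eps i j) :=
    hm ⟨psi i.1 * e i.1 * phi i.1, ⟨i.1, rfl⟩⟩ eps (Subtype.ext i.2) i.1 j.1 rfl hcond i.2 j.2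
  have habs : ∀ z : A, z ∈ corner K (eps : A) → (eps : A) * z * (eps : A) = z := by
    obtain ⟨i0, hi0⟩ := eps.2
    rw [← hi0]
    exact fun z hz => corner_absorb (K := K) hidem h2 i0 z hz
  calc psi i.1 * e i.1 *
        (e i.1 * phi i.1 * ↑(m ⟨psi i.1 * e i.1 * phi i.1, ⟨i.1, rfl⟩⟩ ⟨i.1, rfl⟩ ⟨j.1, hcond⟩) *
          (psi j.1 * e j.1)) * (e j.1 * phi j.1)
      = (psi i.1 * e i.1 * (e i.1 * phi i.1)) * ↑(m eps i j) *
          (psi j.1 * e j.1 * (e j.1 * phi j.1)) := by rw [hc]; noncomm_ring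
    _ = (psi i.1 * e i.1 * phi i.1) * ↑(m eps i j) * (psi j.1 * e j.1 * phi j.1) := by
        rw [hvu hidem i.1, hvu hidem j.1]
    _ = (eps : A) * ↑(m eps i j) * (eps : A) := by rw [i.2, j.2]
    _ = ↑(m eps i j) := habs _ (m eps i j).2

end DecompAux

theorem decomposition_matrix_corners (K A ι : Type*) [CommRing K] [Ring A] [Algebra K A]
    [Fintype ι] [DecidableEq ι] [DecidableEq A]
    (e phi psi : ι → A)
    (hidem : ∀ i, IsIdempotentElem (e i))
    (horth : ∀ i j, i ≠ j → e i * e j = 0)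
    (hcomplete : ∑ i, e i = 1)
    (h1 : ∀ i, phi i * psi i * e i = e i)
    (h2 : ∀ i, e i * phi i * psi i = e i)
    (hdisj : ∀ i j : ι, psi i * e i * phi i ≠ psi j * e j * phi j →
      ∀ x : A,
        (∑ k ∈ Finset.univ.filter fun k => psi k * e k * phi k = psi i * e i * phi i, e k) * x *
        (∑ k ∈ Finset.univ.filter fun k => psi k * e k * phi k = psi j * e j * phi j, e k) = 0) :
    ∃ f : A →ₙₐ[K] (∀ eps : {a : A // ∃ i, psi i * e i * phi i = a},
        Matrix {i : ι // psi i * e i * phi i = (eps : A)}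
          {i : ι // psi i * e i * phi i = (eps : A)} (corner K (eps : A))),
      Function.Bijective f :=
  ⟨DecompAux.FHom K e phi psi hidem horth hcomplete h2 hdisj,
    DecompAux.FHom_injective K e phi psi hidem horth hcomplete h2 hdisj,
    DecompAux.FHom_surjective K e phi psi hidem horth hcomplete h2 hdisj⟩
end

section
/- Let $K$ be a commutative ring and let $\partial_0, \partial_1$ be the operators on the Laurent/rational function setting given by $\partial_0 = x_1^{-1}(1 - r_0)$ and $\partial_1 = (x_1 - x_2)^{-1}(r_1 - 1)$, where $r_0$ acts on $K[x_1, x_2]$ by $x_1 \mapsto -x_1$, $x_2 \mapsto x_2$, and $r_1$ swaps $x_1$ and $x_2$. Then $\partial_0$ and $\partial_1$ are well-defined operators on $K[x_1, x_2]$ (the indicated divisions are exact) and they satisfy the type-B braid relation $\partial_0 \partial_1 \partial_0 \partial_1 = \partial_1 \partial_0 \partial_1 \partial_0$. -/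
open MvPolynomial



lemma step0 {F : Type*} [Field F] (s0 : F →+* F) (x0 : F) (p : F) {c : F}
    (hc : c ≠ 0) (hc' : s0 c ≠ 0) :
    (p / c - s0 (p / c)) / x0 = (p * s0 c - c * s0 p) / (c * s0 c * x0) := by
  rw [map_div₀, div_sub_div _ _ hc hc', div_div]

lemma step1 {F : Type*} [Field F] (s1 : F →+* F) (x0 x1 : F) (p : F) {c : F}
    (hc : c ≠ 0) (hc' : s1 c ≠ 0) :
    (s1 (p / c) - p / c) / (x0 - x1) = (s1 p * c - s1 c * p) / (s1 c * c * (x0 - x1)) := by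
  rw [map_div₀, div_sub_div _ _ hc' hc, div_div]

set_option maxHeartbeats 4000000 in
lemma field_braid {F : Type*} [Field F] (s0 s1 : F →+* F) (x0 x1 : F)
    (h00 : ∀ t, s0 (s0 t) = t) (h11 : ∀ t, s1 (s1 t) = t)
    (hbr : ∀ t, s0 (s1 (s0 (s1 t))) = s1 (s0 (s1 (s0 t))))
    (s0x0 : s0 x0 = -x0) (s0x1 : s0 x1 = x1) (s1x0 : s1 x0 = x1) (s1x1 : s1 x1 = x0)
    (hx0 : x0 ≠ 0) (hx1 : x1 ≠ 0) (hsub : x0 - x1 ≠ 0) (hadd : x0 + x1 ≠ 0) (g : F) :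
    (fun h => (h - s0 h) / x0) ((fun h => (s1 h - h) / (x0 - x1))
      ((fun h => (h - s0 h) / x0) ((fun h => (s1 h - h) / (x0 - x1)) g)))
    = (fun h => (s1 h - h) / (x0 - x1)) ((fun h => (h - s0 h) / x0)
      ((fun h => (s1 h - h) / (x0 - x1)) ((fun h => (h - s0 h) / x0) g))) := by
  -- value lemmas
  have v0d : s0 (x0 - x1) = -(x0 + x1) := by rw [map_sub, s0x0, s0x1]; ring
  have v1d : s1 (x0 - x1) = -(x0 - x1) := by rw [map_sub, s1x0, s1x1]; ring
  have v0e : s0 (x0 + x1) = -(x0 - x1) := by rw [map_add, s0x0, s0x1]; ring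
  have v1e : s1 (x0 + x1) = x0 + x1 := by rw [map_add, s1x0, s1x1]; ring
  -- nonzero facts
  have hd := hsub
  have hs0d : s0 (x0 - x1) ≠ 0 := by rw [v0d]; exact neg_ne_zero.2 hadd
  have hs1d : s1 (x0 - x1) ≠ 0 := by rw [v1d]; exact neg_ne_zero.2 hsub
  have hs0e : s0 (x0 + x1) ≠ 0 := by rw [v0e]; exact neg_ne_zero.2 hsub
  have hs1x0 : s1 x0 ≠ 0 := by rw [s1x0]; exact hx1
  have hs0x0 : s0 x0 ≠ 0 := by rw [s0x0]; exact neg_ne_zero.2 hx0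
  have hs0x1 : s0 x1 ≠ 0 := by rw [s0x1]; exact hx1
  have hs1x1 : s1 x1 ≠ 0 := by rw [s1x1]; exact hx0
  -- LHS denominators
  have hC2 : (x0 - x1) * s0 (x0 - x1) * x0 ≠ 0 := mul_ne_zero (mul_ne_zero hd hs0d) hx0
  have hs1C2 : s1 ((x0 - x1) * s0 (x0 - x1) * x0) ≠ 0 := by
    rw [map_mul, map_mul, v0d, map_neg, v1e, v1d, s1x0]
    exact mul_ne_zero (mul_ne_zero (neg_ne_zero.2 hsub) (neg_ne_zero.2 hadd)) hx1
  have hC3 : s1 ((x0 - x1) * s0 (x0 - x1) * x0) * ((x0 - x1) * s0 (x0 - x1) * x0) * (x0 - x1) ≠ 0 :=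
    mul_ne_zero (mul_ne_zero hs1C2 hC2) hd
  have hs0C3 : s0 (s1 ((x0 - x1) * s0 (x0 - x1) * x0) * ((x0 - x1) * s0 (x0 - x1) * x0) * (x0 - x1)) ≠ 0 := by
    simp only [map_mul, v0d, map_neg, v1e, v1d, s1x0, v0e, s0x0, s0x1, neg_neg, h00]
    apply mul_ne_zero (mul_ne_zero (mul_ne_zero (mul_ne_zero _ _) _)
      (mul_ne_zero (mul_ne_zero _ _) _)) _
    all_goals first
      | exact hd | exact hadd | exact hx0 | exact hx1 | exact hsub
      | exact neg_ne_zero.2 hsub | exact neg_ne_zero.2 hadd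
      | exact neg_ne_zero.2 hx0 | exact neg_ne_zero.2 hx1
  -- RHS denominators
  have hC2' : s1 x0 * x0 * (x0 - x1) ≠ 0 := mul_ne_zero (mul_ne_zero hs1x0 hx0) hd
  have hs0C2' : s0 (s1 x0 * x0 * (x0 - x1)) ≠ 0 := by
    rw [map_mul, map_mul, s1x0, s0x1, s0x0, v0d]
    exact mul_ne_zero (mul_ne_zero hx1 (neg_ne_zero.2 hx0)) (neg_ne_zero.2 hadd)
  have hC3' : s1 x0 * x0 * (x0 - x1) * s0 (s1 x0 * x0 * (x0 - x1)) * x0 ≠ 0 :=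
    mul_ne_zero (mul_ne_zero hC2' hs0C2') hx0
  have hs1C3' : s1 (s1 x0 * x0 * (x0 - x1) * s0 (s1 x0 * x0 * (x0 - x1)) * x0) ≠ 0 := by
    simp only [map_mul, s1x0, s0x1, s0x0, v0d, map_neg, v1e, v1d, s1x1, h11, neg_neg]
    apply mul_ne_zero (mul_ne_zero (mul_ne_zero (mul_ne_zero _ _) _)
      (mul_ne_zero (mul_ne_zero _ _) _)) _
    all_goals first
      | exact hd | exact hadd | exact hx0 | exact hx1 | exact hsub
      | exact neg_ne_zero.2 hsub | exact neg_ne_zero.2 hadd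
      | exact neg_ne_zero.2 hx0 | exact neg_ne_zero.2 hx1
  simp only []
  rw [step0 s0 x0 (s1 g - g) hd hs0d]
  rw [step1 s1 x0 x1 ((s1 g - g) * s0 (x0 - x1) - (x0 - x1) * s0 (s1 g - g)) hC2 hs1C2]
  rw [step0 s0 x0 _ hC3 hs0C3]
  rw [step1 s1 x0 x1 (g - s0 g) hx0 hs1x0]
  rw [step0 s0 x0 _ hC2' hs0C2']
  rw [step1 s1 x0 x1 _ hC3' hs1C3']
  rw [div_eq_div_iff (mul_ne_zero (mul_ne_zero hC3 hs0C3) hx0)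
    (mul_ne_zero (mul_ne_zero hs1C3' hC3') hd)]
  simp only [map_sub, map_mul, map_neg, map_add, s0x0, s0x1, s1x0, s1x1, v0d, v1d, v0e, v1e,
    h00, h11, hbr, neg_neg]
  ring

namespace DemB
open MvPolynomial Polynomial
variable (K : Type*) [CommRing K]

noncomputable abbrev r0 : MvPolynomial (Fin 2) K →ₐ[K] MvPolynomial (Fin 2) K :=
  aeval ![-X 0, X 1]
noncomputable abbrev r1 : MvPolynomial (Fin 2) K →ₐ[K] MvPolynomial (Fin 2) K :=
  aeval ![X 1, X 0]
noncomputable abbrev E : MvPolynomial (Fin 2) K ≃ₐ[K] Polynomial (MvPolynomial (Fin 1) K) :=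
  MvPolynomial.finSuccEquiv K 1

lemma E_X0 : E K (X 0) = Polynomial.X := finSuccEquiv_X_zero
lemma E_X1 : E K (X 1) = Polynomial.C (X 0) := finSuccEquiv_X_succ (j := 0)

noncomputable def ε (a : MvPolynomial (Fin 1) K) :
    MvPolynomial (Fin 2) K →ₐ[K] MvPolynomial (Fin 1) K :=
  ((Polynomial.aeval a).restrictScalars K).comp (E K).toAlgHom

lemma ε_apply (a : MvPolynomial (Fin 1) K) (f : MvPolynomial (Fin 2) K) :
    ε K a f = (E K f).eval a := by
  simp [ε, Polynomial.coe_aeval_eq_eval]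

lemma ε_X0 (a) : ε K a (X 0) = a := by simp [ε, E_X0]
lemma ε_X1 (a) : ε K a (X 1) = X 0 := by simp [ε, E_X1]

lemma eval_zero_sub_r0 (f : MvPolynomial (Fin 2) K) :
    (E K (f - r0 K f)).eval 0 = 0 := by
  have h : (ε K 0).comp (r0 K) = ε K 0 := by
    apply MvPolynomial.algHom_ext
    intro i
    fin_cases i <;>
      simp [ε_X0, ε_X1, map_neg]
  have := DFunLike.congr_fun h f
  simp only [AlgHom.comp_apply] at this
  rw [map_sub, Polynomial.eval_sub, ← ε_apply, ← ε_apply, this, sub_self]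

lemma eval_X0_sub_r1 (f : MvPolynomial (Fin 2) K) :
    (E K (r1 K f - f)).eval (X 0) = 0 := by
  have h : (ε K (X 0)).comp (r1 K) = ε K (X 0) := by
    apply MvPolynomial.algHom_ext
    intro i
    fin_cases i <;> simp [ε_X0, ε_X1]
  have := DFunLike.congr_fun h f
  simp only [AlgHom.comp_apply] at this
  rw [map_sub, Polynomial.eval_sub, ← ε_apply, ← ε_apply, this, sub_self]

noncomputable def D0f (f : MvPolynomial (Fin 2) K) : MvPolynomial (Fin 2) K :=
  (E K).symm ((E K (f - r0 K f)) /ₘ Polynomial.X)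

noncomputable def D1f (f : MvPolynomial (Fin 2) K) : MvPolynomial (Fin 2) K :=
  (E K).symm ((E K (r1 K f - f)) /ₘ (Polynomial.X - Polynomial.C (X 0)))

lemma D0f_spec (f : MvPolynomial (Fin 2) K) : X 0 * D0f K f = f - r0 K f := by
  apply (E K).injective
  rw [map_mul, E_X0, D0f, AlgEquiv.apply_symm_apply]
  have h := Polynomial.modByMonic_add_div (E K (f - r0 K f)) Polynomial.X
  rw [Polynomial.modByMonic_X, eval_zero_sub_r0, map_zero, zero_add] at h
  exact h

lemma D1f_spec (f : MvPolynomial (Fin 2) K) : (X 0 - X 1) * D1f K f = r1 K f - f := by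
  apply (E K).injective
  rw [map_mul, map_sub, E_X0, E_X1, D1f, AlgEquiv.apply_symm_apply]
  have h := Polynomial.modByMonic_add_div (E K (r1 K f - f)) (Polynomial.X - Polynomial.C (X 0))
  rw [Polynomial.modByMonic_X_sub_C_eq_C_eval, eval_X0_sub_r1, map_zero, zero_add] at h
  exact h

lemma cancel0 {p q : MvPolynomial (Fin 2) K} (h : X 0 * p = X 0 * q) : p = q := by
  apply (E K).injective
  have h2 : Polynomial.X * E K p = Polynomial.X * E K q := by
    have := congrArg (E K) h
    simpa [map_mul, E_X0] using this
  exact Polynomial.monic_X.isRegular.left h2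

lemma cancel1 {p q : MvPolynomial (Fin 2) K} (h : (X 0 - X 1) * p = (X 0 - X 1) * q) :
    p = q := by
  apply (E K).injective
  have h2 : (Polynomial.X - Polynomial.C (X 0)) * E K p
      = (Polynomial.X - Polynomial.C (X 0)) * E K q := by
    have := congrArg (E K) h
    simpa [map_mul, map_sub, E_X0, E_X1] using this
  exact (Polynomial.monic_X_sub_C (X 0)).isRegular.left h2

noncomputable def D0 : MvPolynomial (Fin 2) K →ₗ[K] MvPolynomial (Fin 2) K where
  toFun := D0f K
  map_add' f g := by
    apply cancel0 K
    rw [mul_add, D0f_spec, D0f_spec, D0f_spec, map_add]; ring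
  map_smul' c f := by
    apply cancel0 K
    simp only [RingHom.id_apply]
    rw [Algebra.mul_smul_comm, D0f_spec, D0f_spec, map_smul, smul_sub]

noncomputable def D1 : MvPolynomial (Fin 2) K →ₗ[K] MvPolynomial (Fin 2) K where
  toFun := D1f K
  map_add' f g := by
    apply cancel1 K
    rw [mul_add, D1f_spec, D1f_spec, D1f_spec, map_add]; ring
  map_smul' c f := by
    apply cancel1 K
    simp only [RingHom.id_apply]
    rw [Algebra.mul_smul_comm, D1f_spec, D1f_spec, map_smul, smul_sub]

lemma D0_spec (f : MvPolynomial (Fin 2) K) : X 0 * D0 K f = f - r0 K f := D0f_spec K f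
lemma D1_spec (f : MvPolynomial (Fin 2) K) : (X 0 - X 1) * D1 K f = r1 K f - f := D1f_spec K f


-- Z section
abbrev A := MvPolynomial (Fin 2) ℤ
abbrev F := FractionRing A

lemma inv0 : (r0 ℤ).comp (r0 ℤ) = AlgHom.id ℤ A := by
  apply MvPolynomial.algHom_ext; intro i; fin_cases i <;> simp

lemma inv1 : (r1 ℤ).comp (r1 ℤ) = AlgHom.id ℤ A := by
  apply MvPolynomial.algHom_ext; intro i; fin_cases i <;> simp

lemma brA : ((r0 ℤ).comp ((r1 ℤ).comp ((r0 ℤ).comp (r1 ℤ))))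
    = ((r1 ℤ).comp ((r0 ℤ).comp ((r1 ℤ).comp (r0 ℤ)))) := by
  apply MvPolynomial.algHom_ext; intro i; fin_cases i <;> simp

noncomputable def e0 : A ≃ₐ[ℤ] A := AlgEquiv.ofAlgHom (r0 ℤ) (r0 ℤ) inv0 inv0
noncomputable def e1 : A ≃ₐ[ℤ] A := AlgEquiv.ofAlgHom (r1 ℤ) (r1 ℤ) inv1 inv1

noncomputable def s0 : F →+* F :=
  (IsFractionRing.ringEquivOfRingEquiv (A := A) (B := A) e0.toRingEquiv : F ≃+* F).toRingHom
noncomputable def s1 : F →+* F :=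
  (IsFractionRing.ringEquivOfRingEquiv (A := A) (B := A) e1.toRingEquiv : F ≃+* F).toRingHom

noncomputable abbrev ι : A →+* F := algebraMap A F

lemma s0_ι (a : A) : s0 (ι a) = ι (r0 ℤ a) := by
  exact IsFractionRing.ringEquivOfRingEquiv_algebraMap (K := F) (L := F) (e0.toRingEquiv) a

lemma s1_ι (a : A) : s1 (ι a) = ι (r1 ℤ a) := by
  exact IsFractionRing.ringEquivOfRingEquiv_algebraMap (K := F) (L := F) (e1.toRingEquiv) a

lemma hom_ext {j k : F →+* F} (h : ∀ a : A, j (ι a) = k (ι a)) : j = k :=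
  IsLocalization.ringHom_ext (nonZeroDivisors A) (RingHom.ext h)

lemma s00 (t : F) : s0 (s0 t) = t := by
  have : (s0.comp s0) = RingHom.id F := by
    apply hom_ext; intro a
    rw [RingHom.comp_apply, s0_ι, s0_ι, RingHom.id_apply]
    exact congrArg ι (DFunLike.congr_fun inv0 a)
  exact DFunLike.congr_fun this t

lemma s11 (t : F) : s1 (s1 t) = t := by
  have : (s1.comp s1) = RingHom.id F := by
    apply hom_ext; intro a
    rw [RingHom.comp_apply, s1_ι, s1_ι, RingHom.id_apply]
    exact congrArg ι (DFunLike.congr_fun inv1 a)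
  exact DFunLike.congr_fun this t

lemma sbr (t : F) : s0 (s1 (s0 (s1 t))) = s1 (s0 (s1 (s0 t))) := by
  have : (s0.comp (s1.comp (s0.comp s1))) = (s1.comp (s0.comp (s1.comp s0))) := by
    apply hom_ext; intro a
    simp only [RingHom.comp_apply, s0_ι, s1_ι]
    exact congrArg (ι) (DFunLike.congr_fun brA a)
  exact DFunLike.congr_fun this t

noncomputable abbrev x0F : F := ι (X 0)
noncomputable abbrev x1F : F := ι (X 1)

lemma s0_x0 : s0 x0F = -x0F := by rw [s0_ι]; simp
lemma s0_x1 : s0 x1F = x1F := by rw [s0_ι]; simp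
lemma s1_x0 : s1 x0F = x1F := by rw [s1_ι]; simp
lemma s1_x1 : s1 x1F = x0F := by rw [s1_ι]; simp

lemma ι_inj : Function.Injective (ι) := IsFractionRing.injective A F

lemma ne_zero_of_eval (a : A) (h : eval ![1, 2] a ≠ 0) : ι a ≠ 0 := by
  intro h0
  apply h
  have : a = 0 := by
    apply ι_inj; rw [h0, map_zero]
  rw [this, map_zero]

lemma hx0F : x0F ≠ 0 := by apply ne_zero_of_eval; simp
lemma hx1F : x1F ≠ 0 := by apply ne_zero_of_eval; simp
lemma hsubF : x0F - x1F ≠ 0 := by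
  rw [← map_sub]; apply ne_zero_of_eval; simp
lemma haddF : x0F + x1F ≠ 0 := by
  rw [← map_add]; apply ne_zero_of_eval; simp

lemma compat0 (h : A) : ι (D0 ℤ h) = (ι h - s0 (ι h)) / x0F := by
  rw [eq_div_iff hx0F, s0_ι, ← map_sub, ← D0_spec ℤ h, map_mul, mul_comm]

lemma compat1 (h : A) : ι (D1 ℤ h) = (s1 (ι h) - ι h) / (x0F - x1F) := by
  rw [eq_div_iff hsubF, s1_ι, ← map_sub, ← map_sub, ← D1_spec ℤ h, map_mul, mul_comm]

lemma braidZ (f : A) :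
    D0 ℤ (D1 ℤ (D0 ℤ (D1 ℤ f))) = D1 ℤ (D0 ℤ (D1 ℤ (D0 ℤ f))) := by
  apply ι_inj
  rw [compat0, compat1, compat0, compat1, compat1, compat0, compat1, compat0]
  exact field_braid s0 s1 x0F x1F s00 s11 sbr s0_x0 s0_x1 s1_x0 s1_x1
    hx0F hx1F hsubF haddF (ι f)

section Transfer
variable (K : Type*) [CommRing K]

noncomputable abbrev φ : A →+* MvPolynomial (Fin 2) K :=
  MvPolynomial.map (Int.castRingHom K)

lemma φ_r0 (p : A) : r0 K (φ K p) = φ K (r0 ℤ p) := by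
  have h : ((r0 K : MvPolynomial (Fin 2) K →ₐ[K] MvPolynomial (Fin 2) K) :
      MvPolynomial (Fin 2) K →+* MvPolynomial (Fin 2) K).comp (φ K)
      = (φ K).comp ((r0 ℤ : A →ₐ[ℤ] A) : A →+* A) := by
    apply MvPolynomial.ringHom_ext
    · intro r; simp
    · intro i; fin_cases i <;> simp
  exact DFunLike.congr_fun h p

lemma φ_r1 (p : A) : r1 K (φ K p) = φ K (r1 ℤ p) := by
  have h : ((r1 K : MvPolynomial (Fin 2) K →ₐ[K] MvPolynomial (Fin 2) K) :
      MvPolynomial (Fin 2) K →+* MvPolynomial (Fin 2) K).comp (φ K)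
      = (φ K).comp ((r1 ℤ : A →ₐ[ℤ] A) : A →+* A) := by
    apply MvPolynomial.ringHom_ext
    · intro r; simp
    · intro i; fin_cases i <;> simp
  exact DFunLike.congr_fun h p

lemma φ_D0 (p : A) : D0 K (φ K p) = φ K (D0 ℤ p) := by
  apply cancel0 K
  rw [D0_spec, φ_r0, ← map_sub, ← D0_spec ℤ p, map_mul]
  congr 1
  simp

lemma φ_D1 (p : A) : D1 K (φ K p) = φ K (D1 ℤ p) := by
  apply cancel1 K
  rw [D1_spec, φ_r1, ← map_sub, ← D1_spec ℤ p, map_mul]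
  congr 1
  simp

lemma braidK (f : MvPolynomial (Fin 2) K) :
    D0 K (D1 K (D0 K (D1 K f))) = D1 K (D0 K (D1 K (D0 K f))) := by
  induction f using MvPolynomial.induction_on' with
  | monomial u a =>
    have hm : (monomial u) a = a • φ K (monomial u 1) := by
      rw [MvPolynomial.map_monomial]
      simp [MvPolynomial.smul_monomial]
    rw [hm]
    simp only [map_smul, φ_D0, φ_D1]
    exact congrArg (fun z => a • φ K z) (braidZ _)
  | add p q hp hq => simp only [map_add, hp, hq]

end Transfer

end DemB



/-- The divided difference (Demazure) operators
`∂₀ f = (f - r₀ f)/x₁` and `∂₁ f = (r₁ f - f)/(x₁ - x₂)` — where `r₀ : x₁ ↦ -x₁` and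
`r₁` swaps `x₁, x₂` — are well-defined `K`-linear operators on `K[x₁, x₂]` (the divisions
are exact) and satisfy the type-B braid relation `∂₀∂₁∂₀∂₁ = ∂₁∂₀∂₁∂₀`. -/
theorem demazure_typeB_braid (K : Type*) [CommRing K] :
    ∃ D0 D1 : MvPolynomial (Fin 2) K →ₗ[K] MvPolynomial (Fin 2) K,
      (∀ f : MvPolynomial (Fin 2) K,
        X 0 * D0 f = f - aeval ![-X 0, X 1] f) ∧
      (∀ f : MvPolynomial (Fin 2) K,
        (X 0 - X 1) * D1 f = aeval ![X 1, X 0] f - f) ∧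
      D0 ∘ₗ D1 ∘ₗ D0 ∘ₗ D1 = D1 ∘ₗ D0 ∘ₗ D1 ∘ₗ D0 := by
  refine ⟨DemB.D0 K, DemB.D1 K, DemB.D0_spec K, DemB.D1_spec K, ?_⟩
  apply LinearMap.ext
  intro f
  simp only [LinearMap.comp_apply]
  exact DemB.braidK K f
end
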